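/- Let A be a finite alphabet, Q a probability distribution on A with full support, and P, R probability distributions on A with ‖P − R‖₁ ≤ 1/2. Then H(P,Q) − H(R,Q) ≤ log(#A)·‖P − R‖₁ + η(‖P − R‖₁) − ‖P − R‖₁ · log Q_min, where η(t) = −t log t and Q_min = min_{a∈A} Q(a). -/

import Mathlib

open Filter Finset

/-- Base-2 relative entropy (real-valued formula; meaningful when `P ≪ Q`). -/
noncomputable def klD {A : Type*} [Fintype A] (P Q : A → ℝ) : ℝ :=
  ∑ a, P a * (Real.logb 2 (P a) - Real.logb 2 (Q a))

/-- Base-2 relative entropy with value `⊤` when `P` is not absolutely continuous w.r.t. `Q`. -/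
noncomputable def klDE {A : Type*} [Fintype A] (P Q : A → ℝ) : EReal :=
  if ∀ a, Q a = 0 → P a = 0 then ((klD P Q : ℝ) : EReal) else ⊤

/-- ℓ¹ distance. -/
noncomputable def l1 {A : Type*} [Fintype A] (P Q : A → ℝ) : ℝ := ∑ a, |P a - Q a|

/-- Probability distribution on a finite set. -/
def IsProbDist {A : Type*} [Fintype A] (P : A → ℝ) : Prop := (∀ a, 0 ≤ P a) ∧ ∑ a, P a = 1

/-- Empirical distribution (type) of a sequence. -/
noncomputable def emp {A : Type*} [Fintype A] [DecidableEq A] {n : ℕ} (x : Fin n → A) : A → ℝ :=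
  fun a => ((Finset.univ.filter fun i => x i = a).card : ℝ) / n

/-- Product (i.i.d.) measure of a set of sequences. -/
noncomputable def prodP {A : Type*} [Fintype A] (Q : A → ℝ) {n : ℕ} (M : Set (Fin n → A)) : ℝ :=
  ∑ x : Fin n → A, Set.indicator M (fun y => ∏ i, Q (y i)) x

/-- Base-2 logarithm with value `⊥` at nonpositive reals. -/
noncomputable def elog2 (t : ℝ) : EReal := if t ≤ 0 then ⊥ else ((Real.logb 2 t : ℝ) : EReal)


lemma mul_log_mono' {a b : ℝ} (ha : 0 ≤ a) (hab : a ≤ b) :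
    a * Real.log a ≤ a * Real.log b := by
  rcases eq_or_lt_of_le ha with h | h
  · simp [← h]
  · exact mul_le_mul_of_nonneg_left (Real.log_le_log h hab) ha

/-- `negMulLog (1 - t) ≤ negMulLog t` for `t ∈ [0, 1/2]`. -/
lemma negMulLog_one_sub_le {t : ℝ} (h0 : 0 ≤ t) (h1 : t ≤ 1/2) :
    Real.negMulLog (1 - t) ≤ Real.negMulLog t := by
  have he1 : (2:ℝ) ≤ Real.exp 1 := by
    have := Real.add_one_le_exp (1:ℝ); linarith
  have he2 : (4:ℝ) ≤ Real.exp 2 := by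
    have h2 : Real.exp 2 = Real.exp 1 * Real.exp 1 := by
      rw [← Real.exp_add]; norm_num
    nlinarith [Real.exp_pos 1]
  have hem : Real.exp (-2) * Real.exp 2 = 1 := by rw [← Real.exp_add]; norm_num
  have hepos : (0:ℝ) < Real.exp (-2) := Real.exp_pos _
  have h4e : 4 * Real.exp (-2) ≤ 1 := by nlinarith [Real.exp_pos 2]
  set s := Real.sqrt (1 - 4 * Real.exp (-2)) with hs
  have hs0 : 0 ≤ s := Real.sqrt_nonneg _
  have hssq : s ^ 2 = 1 - 4 * Real.exp (-2) := Real.sq_sqrt (by linarith)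
  have hs1 : s ≤ 1 := by nlinarith
  set c := (1 - s) / 2 with hc
  have hc0 : 0 ≤ c := by rw [hc]; linarith
  have hch : c ≤ 1/2 := by rw [hc]; linarith
  have hkey : c * (1 - c) = Real.exp (-2) := by
    rw [hc]; nlinarith [hssq]
  set f : ℝ → ℝ := fun u => Real.negMulLog u - Real.negMulLog (1 - u) with hf
  have hcont : Continuous f := by
    rw [hf]
    exact Real.continuous_negMulLog.sub
      (Real.continuous_negMulLog.comp (continuous_const.sub continuous_id))
  have hderiv : ∀ u ∈ Set.Ioo (0:ℝ) 1,
      HasDerivAt f (-Real.log u - 1 - (Real.log (1-u) + 1)) u := by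
    intro u hu
    have h1 : HasDerivAt Real.negMulLog (-Real.log u - 1) u :=
      Real.hasDerivAt_negMulLog (ne_of_gt hu.1)
    have hin : HasDerivAt (fun x : ℝ => 1 - x) (-1) u := by
      simpa using (hasDerivAt_id u).const_sub 1
    have h2 : HasDerivAt (fun x => Real.negMulLog (1 - x))
        ((-Real.log (1-u) - 1) * (-1)) u := by
      have hne : (1:ℝ) - u ≠ 0 := by have := hu.2; intro hh; linarith [hu.2]
      exact (Real.hasDerivAt_negMulLog hne).comp u hin
    have h3 := h1.sub h2
    exact h3.congr_deriv (by ring)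
  -- monotone on [0, c]
  have hmono : MonotoneOn f (Set.Icc 0 c) := by
    apply monotoneOn_of_deriv_nonneg (convex_Icc _ _) hcont.continuousOn
    · intro x hx
      rw [interior_Icc] at hx
      exact ((hderiv x ⟨hx.1, by linarith [hx.2]⟩).differentiableAt).differentiableWithinAt
    · intro x hx
      rw [interior_Icc] at hx
      have hx1 : x < 1 := by linarith [hx.2]
      rw [(hderiv x ⟨hx.1, hx1⟩).deriv]
      have hmul : x * (1 - x) ≤ Real.exp (-2) := by
        rw [← hkey]; nlinarith [hx.1, hx.2]
      have hlog : Real.log (x * (1 - x)) ≤ -2 := by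
        calc Real.log (x * (1 - x)) ≤ Real.log (Real.exp (-2)) :=
          Real.log_le_log (by nlinarith [hx.1]) hmul
        _ = -2 := Real.log_exp _
      rw [Real.log_mul (ne_of_gt hx.1) (by intro hh; nlinarith)] at hlog
      linarith
  -- antitone on [c, 1/2]
  have hanti : AntitoneOn f (Set.Icc c (1/2)) := by
    apply antitoneOn_of_deriv_nonpos (convex_Icc _ _) hcont.continuousOn
    · intro x hx
      rw [interior_Icc] at hx
      exact ((hderiv x ⟨lt_of_le_of_lt hc0 hx.1, by linarith [hx.2]⟩).differentiableAt).differentiableWithinAt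
    · intro x hx
      rw [interior_Icc] at hx
      have hx0 : 0 < x := lt_of_le_of_lt hc0 hx.1
      have hx1 : x < 1 := by linarith [hx.2]
      rw [(hderiv x ⟨hx0, hx1⟩).deriv]
      have hmul : Real.exp (-2) ≤ x * (1 - x) := by
        rw [← hkey]; nlinarith [hx.1, hx.2]
      have hlog : (-2:ℝ) ≤ Real.log (x * (1 - x)) := by
        calc (-2:ℝ) = Real.log (Real.exp (-2)) := (Real.log_exp _).symm
        _ ≤ Real.log (x * (1 - x)) := Real.log_le_log hepos hmul
      rw [Real.log_mul (ne_of_gt hx0) (by intro hh; nlinarith)] at hlog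
      linarith
  have hf0 : f 0 = 0 := by rw [hf]; simp
  have hfh : f (1/2) = 0 := by rw [hf]; norm_num
  have hgoal : 0 ≤ f t := by
    clear_value f
    rcases le_total t c with h | h
    · have := hmono (Set.mem_Icc.2 ⟨le_refl 0, hc0⟩) (Set.mem_Icc.2 ⟨h0, h⟩) h0
      have hf0 : f 0 = 0 := by rw [hf]; simp
      linarith [this, hf0.symm.le]
    · have := hanti (Set.mem_Icc.2 ⟨h, h1⟩) (Set.mem_Icc.2 ⟨hch, le_refl _⟩) h1
      have hfh : f (1/2) = 0 := by rw [hf]; norm_num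
      linarith
  rw [hf] at hgoal
  simp only at hgoal
  linarith

/-- For `t > 0`, `u ↦ negMulLog u - negMulLog (u + t)` is monotone on `[0, ∞)`. -/
lemma negMulLog_shift_mono {t : ℝ} (ht : 0 < t) :
    MonotoneOn (fun u => Real.negMulLog u - Real.negMulLog (u + t)) (Set.Ici 0) := by
  set f : ℝ → ℝ := fun u => Real.negMulLog u - Real.negMulLog (u + t) with hf
  have hcont : Continuous f := by
    rw [hf]
    exact Real.continuous_negMulLog.sub
      (Real.continuous_negMulLog.comp (continuous_id.add continuous_const))
  have hderiv : ∀ u ∈ Set.Ioi (0:ℝ),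
      HasDerivAt f (-Real.log u - 1 - (-Real.log (u + t) - 1)) u := by
    intro u hu
    have hu0 : 0 < u := hu
    have h1 : HasDerivAt Real.negMulLog (-Real.log u - 1) u :=
      Real.hasDerivAt_negMulLog (ne_of_gt hu0)
    have hin : HasDerivAt (fun x : ℝ => x + t) 1 u := (hasDerivAt_id u).add_const t
    have h2 : HasDerivAt (fun x => Real.negMulLog (x + t))
        ((-Real.log (u + t) - 1) * 1) u :=
      (Real.hasDerivAt_negMulLog (by positivity)).comp u hin
    have h3 := h1.sub h2
    exact h3.congr_deriv (by ring)
  apply monotoneOn_of_deriv_nonneg (convex_Ici _) hcont.continuousOn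
  · intro x hx
    rw [interior_Ici] at hx
    exact ((hderiv x hx).differentiableAt).differentiableWithinAt
  · intro x hx
    rw [interior_Ici] at hx
    rw [(hderiv x hx).deriv]
    have : Real.log x ≤ Real.log (x + t) := Real.log_le_log hx (by linarith)
    linarith

/-- Pointwise entropy continuity lemma. -/
lemma negMulLog_sub_le {x y : ℝ} (hx0 : 0 ≤ x) (hx1 : x ≤ 1) (hy0 : 0 ≤ y) (hy1 : y ≤ 1)
    (hd : |x - y| ≤ 1/2) :
    Real.negMulLog y - Real.negMulLog x ≤ Real.negMulLog |x - y| := by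
  rcases le_total x y with h | h
  · rw [abs_sub_comm, abs_of_nonneg (by linarith : (0:ℝ) ≤ y - x)]
    have h1 : x * Real.log x ≤ x * Real.log y := mul_log_mono' hx0 h
    have h2 : (y - x) * Real.log (y - x) ≤ (y - x) * Real.log y :=
      mul_log_mono' (by linarith) (by linarith)
    have hy : y * Real.log y = x * Real.log y + (y - x) * Real.log y := by ring
    simp only [Real.negMulLog]
    nlinarith
  · rw [abs_of_nonneg (by linarith : (0:ℝ) ≤ x - y)]
    rcases eq_or_lt_of_le h with he | hlt
    · rw [he]; simp
    · set t := x - y with htdef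
      have ht0 : 0 < t := by rw [htdef]; linarith
      have ht2 : t ≤ 1/2 := by
        rwa [abs_of_nonneg (by linarith : (0:ℝ) ≤ x - y)] at hd
      have hmono := negMulLog_shift_mono ht0
      have hy1t : y ≤ 1 - t := by rw [htdef]; linarith
      have hstep := hmono (Set.mem_Ici.2 hy0) (Set.mem_Ici.2 (by linarith)) hy1t
      simp only at hstep
      have hyx : y + t = x := by rw [htdef]; ring
      have h1t : (1 - t) + t = 1 := by ring
      rw [hyx, h1t, Real.negMulLog_one] at hstep
      have h3 : Real.negMulLog (1 - t) ≤ Real.negMulLog t :=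
        negMulLog_one_sub_le ht0.le ht2
      linarith

/-- Sum of `negMulLog` bound. -/
lemma sum_negMulLog_le {A : Type*} [Fintype A] [Nonempty A] (d : A → ℝ) (hd : ∀ a, 0 ≤ d a) :
    ∑ a, Real.negMulLog (d a) ≤
      (∑ a, d a) * Real.log (Fintype.card A) + Real.negMulLog (∑ a, d a) := by
  set δ := ∑ a, d a with hδ
  have hδ0 : 0 ≤ δ := Finset.sum_nonneg fun a _ => hd a
  rcases eq_or_lt_of_le hδ0 with h0 | h0
  · have hz := (Finset.sum_eq_zero_iff_of_nonneg (fun a _ => hd a)).1 h0.symm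
    have hL : ∑ a, Real.negMulLog (d a) = 0 :=
      Finset.sum_eq_zero fun a ha => by rw [hz a ha]; simp
    rw [hL, ← h0]; simp
  · have hnpos : (0:ℝ) < Fintype.card A := by
      exact_mod_cast Fintype.card_pos
    have key : ∀ a, Real.negMulLog (d a)
        ≤ d a * (Real.log (Fintype.card A) - Real.log δ) + δ / Fintype.card A - d a := by
      intro a
      rcases eq_or_lt_of_le (hd a) with h | h
      · rw [← h]; simp only [Real.negMulLog_zero, zero_mul, zero_add, sub_zero]
        positivity
      · have hlog : Real.log (δ / (Fintype.card A * d a)) ≤ δ / (Fintype.card A * d a) - 1 :=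
          Real.log_le_sub_one_of_pos (by positivity)
        have hexp : Real.log (δ / ((Fintype.card A : ℝ) * d a))
            = Real.log δ - Real.log (Fintype.card A) - Real.log (d a) := by
          rw [Real.log_div (ne_of_gt h0) (by positivity),
            Real.log_mul (ne_of_gt hnpos) (ne_of_gt h)]
          ring
        have hmul := mul_le_mul_of_nonneg_left hlog (hd a)
        rw [hexp] at hmul
        have hne : d a * (δ / ((Fintype.card A : ℝ) * d a) - 1)
            = δ / (Fintype.card A : ℝ) - d a := by
          field_simp
        rw [hne] at hmul
        simp only [Real.negMulLog]
        nlinarith [hmul]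
    calc ∑ a, Real.negMulLog (d a)
        ≤ ∑ a, (d a * (Real.log (Fintype.card A) - Real.log δ) + δ / Fintype.card A - d a) :=
          Finset.sum_le_sum fun a _ => key a
      _ = δ * (Real.log (Fintype.card A) - Real.log δ)
          + (Fintype.card A : ℝ) * (δ / Fintype.card A) - δ := by
          rw [Finset.sum_sub_distrib, Finset.sum_add_distrib, ← Finset.sum_mul,
            Finset.sum_const, Finset.card_univ, nsmul_eq_mul, ← hδ]
      _ = δ * Real.log (Fintype.card A) + Real.negMulLog δ := by
          field_simp [Real.negMulLog]
          simp only [Real.negMulLog]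
          ring

/-- Continuity estimate for the relative entropy with a fully supported reference `Q`. -/
theorem rel_entropy_continuity {A : Type*} [Fintype A] [Nonempty A] (P R Q : A → ℝ)
    (hP : IsProbDist P) (hR : IsProbDist R) (hQ : IsProbDist Q)
    (hQpos : ∀ a, 0 < Q a) (hl1 : l1 P R ≤ 1 / 2) :
    klD P Q - klD R Q ≤
      Real.logb 2 (Fintype.card A) * l1 P R + (-(l1 P R) * Real.logb 2 (l1 P R))
        - l1 P R * Real.logb 2 (Finset.univ.inf' Finset.univ_nonempty Q) := by
  obtain ⟨hP0, hP1⟩ := hP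
  obtain ⟨hR0, hR1⟩ := hR
  obtain ⟨hQ0, hQ1⟩ := hQ
  set δ := l1 P R with hδdef
  set Qmin := Finset.univ.inf' Finset.univ_nonempty Q with hQmindef
  have hδsum : δ = ∑ a, |P a - R a| := rfl
  have hδ0 : 0 ≤ δ := by rw [hδsum]; exact Finset.sum_nonneg fun a _ => abs_nonneg _
  have hQminpos : 0 < Qmin := by
    obtain ⟨b, _, hb⟩ := Finset.exists_mem_eq_inf' Finset.univ_nonempty Q
    rw [hQmindef, hb]; exact hQpos b
  have hQminle : ∀ a, Qmin ≤ Q a := fun a => Finset.inf'_le _ (Finset.mem_univ a)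
  have hle1 : ∀ (S : A → ℝ), (∀ a, 0 ≤ S a) → (∑ a, S a) = 1 → ∀ a, S a ≤ 1 := by
    intro S hS hsum a
    rw [← hsum]
    exact Finset.single_le_sum (fun b _ => hS b) (Finset.mem_univ a)
  have hQle1 := hle1 Q (fun a => (hQpos a).le) hQ1
  have hPle1 := hle1 P hP0 hP1
  have hRle1 := hle1 R hR0 hR1
  have hda : ∀ a, |P a - R a| ≤ δ := by
    intro a
    rw [hδsum]
    exact Finset.single_le_sum (f := fun b => |P b - R b|) (fun b _ => abs_nonneg _)
      (Finset.mem_univ a)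
  have hlog2 : (0:ℝ) < Real.log 2 := Real.log_pos (by norm_num)
  -- pointwise bound
  have step : ∀ a, P a * (Real.log (P a) - Real.log (Q a))
      - R a * (Real.log (R a) - Real.log (Q a))
      ≤ Real.negMulLog |P a - R a| + |P a - R a| * (-Real.log Qmin) := by
    intro a
    have h1 : Real.negMulLog (R a) - Real.negMulLog (P a) ≤ Real.negMulLog |P a - R a| :=
      negMulLog_sub_le (hP0 a) (hPle1 a) (hR0 a) (hRle1 a) (le_trans (hda a) hl1)
    have h2 : (R a - P a) * Real.log (Q a) ≤ |P a - R a| * (-Real.log Qmin) := by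
      have hQa0 : Real.log (Q a) ≤ 0 := Real.log_nonpos (hQpos a).le (hQle1 a)
      have hhm : -Real.log (Q a) ≤ -Real.log Qmin := by
        have := Real.log_le_log hQminpos (hQminle a); linarith
      calc (R a - P a) * Real.log (Q a) ≤ |(R a - P a) * Real.log (Q a)| := le_abs_self _
        _ = |P a - R a| * (-Real.log (Q a)) := by
            rw [abs_mul, abs_of_nonpos hQa0, abs_sub_comm]
        _ ≤ |P a - R a| * (-Real.log Qmin) :=
            mul_le_mul_of_nonneg_left hhm (abs_nonneg _)
    have hid : P a * (Real.log (P a) - Real.log (Q a))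
        - R a * (Real.log (R a) - Real.log (Q a))
        = (Real.negMulLog (R a) - Real.negMulLog (P a)) + (R a - P a) * Real.log (Q a) := by
      simp only [Real.negMulLog]; ring
    rw [hid]
    exact add_le_add h1 h2
  -- natural-log key inequality
  have key : (∑ a, P a * (Real.log (P a) - Real.log (Q a)))
      - (∑ a, R a * (Real.log (R a) - Real.log (Q a)))
      ≤ Real.log (Fintype.card A) * δ + (-δ * Real.log δ) - δ * Real.log Qmin := by
    rw [← Finset.sum_sub_distrib]
    calc ∑ a, (P a * (Real.log (P a) - Real.log (Q a))
          - R a * (Real.log (R a) - Real.log (Q a)))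
        ≤ ∑ a, (Real.negMulLog |P a - R a| + |P a - R a| * (-Real.log Qmin)) :=
          Finset.sum_le_sum fun a _ => step a
      _ = (∑ a, Real.negMulLog |P a - R a|) + δ * (-Real.log Qmin) := by
          rw [Finset.sum_add_distrib, ← Finset.sum_mul, ← hδsum]
      _ ≤ ((∑ a, |P a - R a|) * Real.log (Fintype.card A)
            + Real.negMulLog (∑ a, |P a - R a|)) + δ * (-Real.log Qmin) := by
          have := sum_negMulLog_le (fun a => |P a - R a|) (fun a => abs_nonneg _)
          linarith
      _ = Real.log (Fintype.card A) * δ + (-δ * Real.log δ) - δ * Real.log Qmin := by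
          rw [← hδsum]
          simp only [Real.negMulLog]
          ring
  -- convert to base-2 logarithms
  have e1 : ∀ (S : A → ℝ),
      klD S Q = (∑ a, S a * (Real.log (S a) - Real.log (Q a))) / Real.log 2 := by
    intro S
    rw [klD, Finset.sum_div]
    exact Finset.sum_congr rfl fun a _ => by rw [Real.logb, Real.logb]; ring
  have e3 : Real.logb 2 (Fintype.card A) * δ + (-δ * Real.logb 2 δ)
        - δ * Real.logb 2 Qmin
      = (Real.log (Fintype.card A) * δ + (-δ * Real.log δ) - δ * Real.log Qmin)
        / Real.log 2 := by
    rw [Real.logb, Real.logb, Real.logb]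
    ring
  rw [e1 P, e1 R, div_sub_div_same, e3]
  exact (div_le_div_iff_of_pos_right hlog2).mpr key
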